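/- Directed single linkage is scale invariant: let ψ : [0,∞) → [0,∞) be a non-decreasing function with ψ(a) = 0 iff a = 0. For any finite network (X, A_X), the directed minimum chain cost of (X, ψ ∘ A_X) equals ψ composed with the directed minimum chain cost of (X, A_X): ũ*_{ψ(A_X)}(x,x') = ψ(ũ*_{A_X}(x,x')) for all x, x' ∈ X. -/
import Mathlib


/-- The cost of a chain: maximum dissimilarity over consecutive links. -/
def chainCost {X : Type*} (A : X → X → ℝ) : List X → ℝ
  | [] => 0
  | [_] => 0
  | a :: b :: rest => max (A a b) (chainCost A (b :: rest))

/-- The directed minimum chain cost `ũ*` of a network `(X, A)`: the minimum,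
over all chains from `x` to `x'`, of the maximum link dissimilarity. -/
noncomputable def dmcc {X : Type*} (A : X → X → ℝ) (x x' : X) : ℝ :=
  sInf {r | ∃ c : List X, c.head? = some x ∧ c.getLast? = some x' ∧ chainCost A c = r}

lemma chainCost_nonneg {X : Type*} (A : X → X → ℝ) (hnonneg : ∀ x x', 0 ≤ A x x') :
    ∀ c : List X, 0 ≤ chainCost A c
  | [] => le_refl 0
  | [_] => le_refl 0
  | a :: b :: rest => le_max_of_le_left (hnonneg a b)

lemma chainCost_mem {X : Type*} (A : X → X → ℝ) :
    ∀ c : List X, chainCost A c ∈ insert (0 : ℝ) (Set.range fun p : X × X => A p.1 p.2)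
  | [] => Set.mem_insert _ _
  | [_] => Set.mem_insert _ _
  | a :: b :: rest => by
      rcases le_total (A a b) (chainCost A (b :: rest)) with h | h
      · rw [chainCost, max_eq_right h]; exact chainCost_mem A (b :: rest)
      · rw [chainCost, max_eq_left h]; exact Set.mem_insert_iff.2 (Or.inr ⟨(a, b), rfl⟩)

lemma chainCost_comp {X : Type*} (A : X → X → ℝ) (hnonneg : ∀ x x', 0 ≤ A x x')
    (ψ : ℝ → ℝ) (hψmono : ∀ a b, 0 ≤ a → a ≤ b → ψ a ≤ ψ b) (hψ0 : ψ 0 = 0) :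
    ∀ c : List X, chainCost (fun y y' => ψ (A y y')) c = ψ (chainCost A c)
  | [] => by simp [chainCost, hψ0]
  | [_] => by simp [chainCost, hψ0]
  | a :: b :: rest => by
      rw [chainCost, chainCost, chainCost_comp A hnonneg ψ hψmono hψ0 (b :: rest)]
      rcases le_total (A a b) (chainCost A (b :: rest)) with h | h
      · rw [max_eq_right h, max_eq_right (hψmono _ _ (hnonneg a b) h)]
      · rw [max_eq_left h,
          max_eq_left (hψmono _ _ (chainCost_nonneg A hnonneg (b :: rest)) h)]

/-- Directed single linkage is invariant under changes of scale:
for a non-decreasing `ψ : [0,∞) → [0,∞)` with `ψ a = 0` iff `a = 0`, the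
directed minimum chain cost of the rescaled network is the rescaled directed
minimum chain cost. -/
theorem dsl_scale_invariant {X : Type*} [Fintype X]
    (A : X → X → ℝ)
    (hnonneg : ∀ x x', 0 ≤ A x x')
    (hid : ∀ x x', A x x' = 0 ↔ x = x')
    (ψ : ℝ → ℝ)
    (hψnonneg : ∀ a, 0 ≤ a → 0 ≤ ψ a)
    (hψmono : ∀ a b, 0 ≤ a → a ≤ b → ψ a ≤ ψ b)
    (hψzero : ∀ a, 0 ≤ a → (ψ a = 0 ↔ a = 0)) :
    ∀ x x' : X, dmcc (fun y y' => ψ (A y y')) x x' = ψ (dmcc A x x') := by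
  intro x x'
  have hψ0 : ψ 0 = 0 := (hψzero 0 le_rfl).mpr rfl
  set S := {r | ∃ c : List X, c.head? = some x ∧ c.getLast? = some x' ∧ chainCost A c = r}
    with hSdef
  have hne : S.Nonempty := ⟨A x x', [x, x'], rfl, rfl, by
    simp [chainCost, max_eq_left (hnonneg x x')]⟩
  have hfin : S.Finite := by
    apply Set.Finite.subset (Set.Finite.insert (0 : ℝ)
      (Set.finite_range fun p : X × X => A p.1 p.2))
    rintro r ⟨c, -, -, rfl⟩
    exact chainCost_mem A c
  have hmem : sInf S ∈ S := hne.csInf_mem hfin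
  obtain ⟨c₀, h1, h2, h3⟩ := hmem
  have hSnonneg : 0 ≤ sInf S := h3 ▸ chainCost_nonneg A hnonneg c₀
  have hT : {r | ∃ c : List X, c.head? = some x ∧ c.getLast? = some x' ∧
      chainCost (fun y y' => ψ (A y y')) c = r} = ψ '' S := by
    ext r
    constructor
    · rintro ⟨c, hc1, hc2, hc3⟩
      exact ⟨chainCost A c, ⟨c, hc1, hc2, rfl⟩, by
        rw [← hc3, chainCost_comp A hnonneg ψ hψmono hψ0]⟩
    · rintro ⟨s, ⟨c, hc1, hc2, hc3⟩, hs⟩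
      exact ⟨c, hc1, hc2, by rw [chainCost_comp A hnonneg ψ hψmono hψ0, hc3, hs]⟩
  show sInf _ = ψ (sInf S)
  rw [hT]
  apply le_antisymm
  · exact csInf_le (hfin.image ψ).bddBelow ⟨sInf S, ⟨c₀, h1, h2, h3⟩, rfl⟩
  · apply le_csInf (hne.image ψ)
    rintro b ⟨s, hs, rfl⟩
    exact hψmono _ _ hSnonneg (csInf_le hfin.bddBelow hs)
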